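/- Let V be a nontrivial irreducible weight module over the twisted Heisenberg-Virasoro algebra 𝔏 (all weight spaces finite-dimensional). If V is unitary with respect to θ⁺_{α,γ} for some positive real number α and some γ ∈ ℝ, then V is unitary with respect to θ⁺_{1,γ}. -/

import Mathlib

/-- Index type for the standard basis of the twisted Heisenberg-Virasoro algebra. -/
inductive HVIx : Type
  | l : ℤ → HVIx
  | i : ℤ → HVIx
  | cl : HVIx
  | ci : HVIx
  | cli : HVIx

/-- A complex Lie algebra `𝔏` equipped with the structure of the twisted
Heisenberg-Virasoro algebra: a basis `{L_m, I_m, C_L, C_I, C_LI}` with the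
defining Lie brackets. -/
structure THV (𝔏 : Type*) [LieRing 𝔏] [LieAlgebra ℂ 𝔏] where
  b : Module.Basis HVIx ℂ 𝔏
  bracket_LL : ∀ m n : ℤ, ⁅b (.l m), b (.l n)⁆ =
    ((n : ℂ) - (m : ℂ)) • b (.l (m + n)) +
      (if m + n = 0 then (((m : ℂ) ^ 3 - (m : ℂ)) / 12) • b .cl else 0)
  bracket_II : ∀ m n : ℤ, ⁅b (.i m), b (.i n)⁆ =
    (if m + n = 0 then (n : ℂ) • b .ci else 0)
  bracket_LI : ∀ m n : ℤ, ⁅b (.l m), b (.i n)⁆ =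
    (n : ℂ) • b (.i (m + n)) +
      (if m + n = 0 then ((m : ℂ) ^ 2 - (m : ℂ)) • b .cli else 0)
  central_CL : ∀ x : 𝔏, ⁅x, b .cl⁆ = 0
  central_CI : ∀ x : 𝔏, ⁅x, b .ci⁆ = 0
  central_CLI : ∀ x : 𝔏, ⁅x, b .cli⁆ = 0

namespace THV

variable {𝔏 : Type*} [LieRing 𝔏] [LieAlgebra ℂ 𝔏] (s : THV 𝔏)

/-- The element `L n`. -/
noncomputable def L (n : ℤ) : 𝔏 := s.b (.l n)
/-- The element `I n`. -/
noncomputable def I (n : ℤ) : 𝔏 := s.b (.i n)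
/-- The central element `C_L`. -/
noncomputable def CL : 𝔏 := s.b .cl
/-- The central element `C_I`. -/
noncomputable def CI : 𝔏 := s.b .ci
/-- The central element `C_LI`. -/
noncomputable def CLI : 𝔏 := s.b .cli

end THV

/-- `θ` is a conjugate-linear anti-involution of the complex Lie algebra `𝔤`. -/
structure IsConjAntiInvol (𝔤 : Type*) [LieRing 𝔤] [LieAlgebra ℂ 𝔤] (θ : 𝔤 → 𝔤) : Prop where
  map_add : ∀ x y : 𝔤, θ (x + y) = θ x + θ y
  map_smul : ∀ (c : ℂ) (x : 𝔤), θ (c • x) = (starRingEnd ℂ) c • θ x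
  map_bracket : ∀ x y : 𝔤, θ ⁅x, y⁆ = ⁅θ y, θ x⁆
  invol : ∀ x : 𝔤, θ (θ x) = x

/-- A `𝔤`-module `V` is unitary with respect to `θ` if there is a positive definite
Hermitian form `⟨·,·⟩` (linear in the first argument) with `⟨x·u, v⟩ = ⟨u, θ(x)·v⟩`. -/
def IsUnitaryWith (𝔤 : Type*) [LieRing 𝔤] [LieAlgebra ℂ 𝔤]
    (V : Type*) [AddCommGroup V] [Module ℂ V] [LieRingModule 𝔤 V]
    (θ : 𝔤 → 𝔤) : Prop :=
  ∃ B : V → V → ℂ,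
    (∀ u v w : V, B (u + v) w = B u w + B v w) ∧
    (∀ (c : ℂ) (u v : V), B (c • u) v = c * B u v) ∧
    (∀ u v : V, B v u = (starRingEnd ℂ) (B u v)) ∧
    (∀ v : V, v ≠ 0 → 0 < (B v v).re) ∧
    (∀ (x : 𝔤) (u v : V), B ⁅x, u⁆ v = B u ⁅θ x, v⁆)


namespace THV

variable {𝔏 : Type*} [LieRing 𝔏] [LieAlgebra ℂ 𝔏]

/-- Images of the basis vectors under `θ⁺_{α,γ}`. -/
noncomputable def thetaPlusB (s : THV 𝔏) (α γ : ℝ) : HVIx → 𝔏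
  | .l n => ((α : ℂ) ^ n) • s.L (-n)
  | .i n => if n = 0 then
      Complex.exp (Complex.I * (γ : ℂ)) • s.I 0 +
        (2 * Complex.exp (Complex.I * (γ : ℂ))) • s.CLI
    else ((α : ℂ) ^ n * Complex.exp (Complex.I * (γ : ℂ))) • s.I (-n)
  | .cl => s.CL
  | .ci => Complex.exp (2 * Complex.I * (γ : ℂ)) • s.CI
  | .cli => -(Complex.exp (Complex.I * (γ : ℂ)) • s.CLI)

/-- The map `θ⁺_{α,γ}`, defined on the basis elements by
`θ⁺(L n) = αⁿ L₋ₙ`, `θ⁺(C_L) = C_L`, `θ⁺(I m) = αᵐ e^{iγ} I₋ₘ (m ≠ 0)`,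
`θ⁺(I 0) = e^{iγ} I 0 + 2 e^{iγ} C_LI`, `θ⁺(C_I) = e^{2iγ} C_I`,
`θ⁺(C_LI) = -e^{iγ} C_LI`, and extended conjugate-linearly. -/
noncomputable def thetaPlus (s : THV 𝔏) (α γ : ℝ) : 𝔏 → 𝔏 :=
  fun x => (s.b.repr x).sum fun ix c => (starRingEnd ℂ) c • s.thetaPlusB α γ ix

end THV

namespace THV

variable {𝔏 : Type*} [LieRing 𝔏] [LieAlgebra ℂ 𝔏]

/-- The spanning family of the Cartan subalgebra `𝔥 = span{L 0, I 0, C_L, C_I, C_LI}`. -/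
noncomputable def hvec (s : THV 𝔏) : Fin 5 → 𝔏 := ![s.L 0, s.I 0, s.CL, s.CI, s.CLI]

/-- The simultaneous eigenspace (weight space) of the Cartan subalgebra `𝔥` on a module `V`,
for the system of eigenvalues `χ`. -/
noncomputable def wtSpace (s : THV 𝔏) (V : Type*) [AddCommGroup V] [Module ℂ V]
    [LieRingModule 𝔏 V] [LieModule ℂ 𝔏 V] (χ : Fin 5 → ℂ) : Submodule ℂ V :=
  ⨅ j : Fin 5, Module.End.eigenspace (LieModule.toEnd ℂ 𝔏 V (s.hvec j)) (χ j)

end THV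


section Aux

open DirectSum

private noncomputable def scaleOp {V : Type*} [AddCommGroup V] [Module ℂ V]
    {E : ℂ → Submodule ℂ V} (hInt : DirectSum.IsInternal E) (g : ℂ → ℝ) : V →ₗ[ℂ] V :=
  (DirectSum.toModule ℂ ℂ V fun μ => ((g μ : ℂ)) • (E μ).subtype) ∘ₗ
    ((LinearEquiv.ofBijective (DirectSum.coeLinearMap E) hInt).symm : V →ₗ[ℂ] ⨁ μ, E μ)

private lemma scaleOp_apply {V : Type*} [AddCommGroup V] [Module ℂ V]
    {E : ℂ → Submodule ℂ V} (hInt : DirectSum.IsInternal E) (g : ℂ → ℝ)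
    (μ : ℂ) (w : V) (hw : w ∈ E μ) : scaleOp hInt g w = ((g μ : ℂ)) • w := by
  unfold scaleOp
  have h1 : (LinearEquiv.ofBijective (DirectSum.coeLinearMap E) hInt).symm w =
      DirectSum.lof ℂ ℂ (fun μ => E μ) μ ⟨w, hw⟩ := by
    rw [LinearEquiv.symm_apply_eq]
    exact (DirectSum.coeLinearMap_of E μ ⟨w, hw⟩).symm
  simp [h1, DirectSum.toModule_lof]

/-- The amount by which a basis element shifts `L 0`-eigenvalues. -/
private def dIx : HVIx → ℤ
  | .l m => m
  | .i m => m
  | .cl => 0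
  | .ci => 0
  | .cli => 0

namespace THV

variable {𝔏 : Type*} [LieRing 𝔏] [LieAlgebra ℂ 𝔏] (s : THV 𝔏)

private lemma thetaPlus_basis (α γ : ℝ) (ix : HVIx) :
    s.thetaPlus α γ (s.b ix) = s.thetaPlusB α γ ix := by
  unfold THV.thetaPlus
  rw [Module.Basis.repr_self, Finsupp.sum_single_index (by simp)]
  simp

private lemma thetaPlus_zero (α γ : ℝ) : s.thetaPlus α γ (0 : 𝔏) = 0 := by
  simp [THV.thetaPlus]

private lemma thetaPlus_add (α γ : ℝ) (x y : 𝔏) :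
    s.thetaPlus α γ (x + y) = s.thetaPlus α γ x + s.thetaPlus α γ y := by
  classical
  unfold THV.thetaPlus
  rw [map_add]
  exact Finsupp.sum_add_index (by simp) (by intros; rw [map_add, add_smul])

private lemma thetaPlus_smul (α γ : ℝ) (c : ℂ) (x : 𝔏) :
    s.thetaPlus α γ (c • x) = (starRingEnd ℂ) c • s.thetaPlus α γ x := by
  unfold THV.thetaPlus
  rw [map_smul, Finsupp.sum_smul_index (by simp), Finsupp.smul_sum]
  simp [map_mul, mul_smul]

end THV

end Aux

/-- Proposition 2.8 (ii): if a nontrivial irreducible weight `𝔏`-module (with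
finite-dimensional weight spaces) is unitary for `θ⁺_{α,γ}` with `α > 0`,
then it is unitary for `θ⁺_{1,γ}`. -/
theorem unitary_thetaPlus_one (𝔏 : Type*) [LieRing 𝔏] [LieAlgebra ℂ 𝔏] (s : THV 𝔏)
    (V : Type*) [AddCommGroup V] [Module ℂ V] [LieRingModule 𝔏 V] [LieModule ℂ 𝔏 V]
    (hnt : ∃ (y : 𝔏) (v : V), ⁅y, v⁆ ≠ 0)
    (hirr : LieModule.IsIrreducible ℂ 𝔏 V)
    (hwt : (⨆ χ : Fin 5 → ℂ, s.wtSpace V χ) = ⊤)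
    (hfd : ∀ χ : Fin 5 → ℂ, FiniteDimensional ℂ (s.wtSpace V χ))
    (α γ : ℝ) (hα : 0 < α)
    (hu : IsUnitaryWith 𝔏 V (s.thetaPlus α γ)) :
    IsUnitaryWith 𝔏 V (s.thetaPlus 1 γ) := by
  classical
  obtain ⟨B, Badd, Bsmul, Bherm, Bpos, Binv⟩ := hu
  have Baddr : ∀ u v w : V, B u (v + w) = B u v + B u w := fun u v w => by
    rw [Bherm (v + w) u, Badd, map_add, ← Bherm v u, ← Bherm w u]
  have Bsmulr : ∀ (c : ℂ) (u v : V), B u (c • v) = (starRingEnd ℂ) c * B u v := fun c u v => by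
    rw [Bherm (c • v) u, Bsmul, map_mul, ← Bherm v u]
  have Bzl : ∀ v : V, B 0 v = 0 := fun v => by simpa using Bsmul 0 0 v
  have Bzr : ∀ v : V, B v 0 = 0 := fun v => by rw [Bherm 0 v, Bzl, map_zero]
  set E : ℂ → Submodule ℂ V :=
    fun μ => Module.End.eigenspace (LieModule.toEnd ℂ 𝔏 V (s.L 0)) μ with hE
  have hmemE : ∀ (μ : ℂ) (w : V), w ∈ E μ ↔ ⁅s.L 0, w⁆ = μ • w := by
    intro μ w
    simp only [hE, Module.End.mem_eigenspace_iff, LieModule.toEnd_apply_apply]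
  have hETop : (⨆ μ : ℂ, E μ) = ⊤ := by
    rw [← top_le_iff, ← hwt]
    refine iSup_le fun χ => le_iSup_of_le (χ 0) ?_
    have h := iInf_le
      (fun j : Fin 5 => Module.End.eigenspace (LieModule.toEnd ℂ 𝔏 V (s.hvec j)) (χ j)) 0
    simpa [THV.wtSpace, THV.hvec, hE] using h
  have hInt : DirectSum.IsInternal E :=
    (DirectSum.isInternal_submodule_iff_iSupIndep_and_iSup_eq_top E).2
      ⟨by rw [hE]; exact Module.End.eigenspaces_iSupIndep _, hETop⟩
  have ind : ∀ P : V → Prop, P 0 → (∀ u v, P u → P v → P (u + v)) →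
      (∀ (μ : ℂ) (w : V), w ∈ E μ → P w) → ∀ v, P v := by
    intro P h0 hadd he v
    have hv : v ∈ ⨆ μ : ℂ, E μ := by rw [hETop]; trivial
    exact Submodule.iSup_induction (motive := P) E hv he h0 hadd
  -- eigenvalue shifting
  have hshift : ∀ ix : HVIx, ⁅s.L 0, s.b ix⁆ = ((dIx ix : ℤ) : ℂ) • s.b ix := by
    intro ix
    cases ix with
    | l m =>
      have h := s.bracket_LL 0 m
      rcases eq_or_ne m 0 with rfl | hm
      · simpa [THV.L, dIx] using h
      · simp only [zero_add] at h
        rw [show s.L 0 = s.b (.l 0) from rfl, h, if_neg hm]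
        simp [dIx]
    | i m =>
      have h := s.bracket_LI 0 m
      rcases eq_or_ne m 0 with rfl | hm
      · simpa [THV.L, dIx] using h
      · simp only [zero_add] at h
        rw [show s.L 0 = s.b (.l 0) from rfl, h, if_neg hm]
        simp [dIx]
    | cl => simp [dIx, s.central_CL]
    | ci => simp [dIx, s.central_CI]
    | cli => simp [dIx, s.central_CLI]
  have hmap : ∀ (ix : HVIx) (μ : ℂ) (u : V), u ∈ E μ →
      ⁅s.b ix, u⁆ ∈ E (μ + (dIx ix : ℂ)) := by
    intro ix μ u hu'
    rw [hmemE] at hu' ⊢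
    rw [leibniz_lie, hshift, hu', smul_lie, lie_smul, add_smul, add_comm]
  have hthetaB : ∀ ix : HVIx,
      s.thetaPlusB α γ ix = ((α : ℂ) ^ (dIx ix)) • s.thetaPlusB 1 γ ix := by
    intro ix
    cases ix with
    | l n => simp [THV.thetaPlusB, dIx, smul_smul]
    | i n =>
      rcases eq_or_ne n 0 with rfl | hn
      · simp [THV.thetaPlusB, dIx]
      · simp [THV.thetaPlusB, dIx, hn, smul_smul]
    | cl => simp [THV.thetaPlusB, dIx]
    | ci => simp [THV.thetaPlusB, dIx]
    | cli => simp [THV.thetaPlusB, dIx]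
  -- orthogonality relation
  have key : ∀ (μ ν : ℂ) (u v : V), u ∈ E μ → v ∈ E ν →
      (μ - (starRingEnd ℂ) ν) * B u v = 0 := by
    intro μ ν u v hu' hv'
    rw [hmemE] at hu' hv'
    have h0 : s.thetaPlus α γ (s.L 0) = s.L 0 := by
      rw [show s.L 0 = s.b (.l 0) from rfl, s.thetaPlus_basis]
      simp [THV.thetaPlusB, THV.L]
    have h := Binv (s.L 0) u v
    rw [hu', h0, hv', Bsmul, Bsmulr] at h
    linear_combination h
  -- self-adjointness of scaling operators
  have selfadj : ∀ g : ℂ → ℝ, (∀ μ ν : ℂ, μ.re = ν.re → g μ = g ν) →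
      ∀ u v : V, B (scaleOp hInt g u) v = B u (scaleOp hInt g v) := by
    intro g hg
    refine ind (fun u => ∀ v : V, B (scaleOp hInt g u) v = B u (scaleOp hInt g v)) ?_ ?_ ?_
    · intro v; beta_reduce; rw [map_zero, Bzl, Bzl]
    · intro u₁ u₂ h1 h2 v
      beta_reduce at h1 h2 ⊢
      rw [map_add, Badd, h1 v, h2 v, Badd]
    · intro μ w hw
      beta_reduce
      refine ind (fun v => B (scaleOp hInt g w) v = B w (scaleOp hInt g v)) ?_ ?_ ?_
      · beta_reduce; rw [map_zero, Bzr, Bzr]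
      · intro v₁ v₂ h1 h2
        beta_reduce at h1 h2 ⊢
        rw [map_add, Baddr, Baddr, h1, h2]
      · intro ν z hz
        beta_reduce
        rw [scaleOp_apply hInt g μ w hw, scaleOp_apply hInt g ν z hz, Bsmul, Bsmulr,
          Complex.conj_ofReal]
        rcases eq_or_ne (B w z) 0 with h | h
        · rw [h, mul_zero, mul_zero]
        · have hk := key μ ν w z hw hz
          have hμν : μ = (starRingEnd ℂ) ν :=
            sub_eq_zero.mp ((mul_eq_zero.mp hk).resolve_right h)
          rw [hg μ ν (by rw [hμν, Complex.conj_re])]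
  set T : V →ₗ[ℂ] V := scaleOp hInt (fun μ => α ^ (-μ.re)) with hT
  set S : V →ₗ[ℂ] V := scaleOp hInt (fun μ => α ^ (-μ.re / 2)) with hS
  set Si : V →ₗ[ℂ] V := scaleOp hInt (fun μ => α ^ (μ.re / 2)) with hSi
  have hTS2 : ∀ v : V, T v = S (S v) := by
    refine ind (fun v => T v = S (S v)) (by beta_reduce; rw [map_zero, map_zero, map_zero])
      (fun u v h1 h2 => by beta_reduce at h1 h2 ⊢; rw [map_add, map_add, map_add, h1, h2]) ?_
    intro μ w hw
    beta_reduce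
    rw [hT, hS, scaleOp_apply hInt _ μ w hw, scaleOp_apply hInt _ μ w hw, map_smul,
      scaleOp_apply hInt _ μ w hw, smul_smul, ← Complex.ofReal_mul, ← Real.rpow_add hα]
    norm_num
  have hSinv : ∀ v : V, Si (S v) = v := by
    refine ind (fun v => Si (S v) = v) (by beta_reduce; rw [map_zero, map_zero])
      (fun u v h1 h2 => by beta_reduce at h1 h2 ⊢; rw [map_add, map_add, h1, h2]) ?_
    intro μ w hw
    beta_reduce
    rw [hS, hSi, scaleOp_apply hInt _ μ w hw, map_smul, scaleOp_apply hInt _ μ w hw,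
      smul_smul, ← Complex.ofReal_mul, ← Real.rpow_add hα]
    rw [show -μ.re / 2 + μ.re / 2 = (0 : ℝ) by ring, Real.rpow_zero, Complex.ofReal_one,
      one_smul]
  have hSne : ∀ v : V, v ≠ 0 → S v ≠ 0 := by
    intro v hv hSv
    exact hv (by rw [← hSinv v, hSv, map_zero])
  refine ⟨fun u v => B (T u) v, ?_, ?_, ?_, ?_, ?_⟩
  · intro u v w
    show B (T (u + v)) w = B (T u) w + B (T v) w
    rw [map_add, Badd]
  · intro c u v
    show B (T (c • u)) v = c * B (T u) v
    rw [map_smul, Bsmul]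
  · intro u v
    show B (T v) u = (starRingEnd ℂ) (B (T u) v)
    rw [← Bherm (T u) v, hT]
    exact selfadj _ (fun μ ν h => by rw [h]) v u
  · intro v hv
    show 0 < (B (T v) v).re
    have h1 : B (T v) v = B (S v) (S v) := by
      rw [hTS2 v, hS]
      exact selfadj _ (fun μ ν h => by rw [h]) (S v) v
    rw [h1]
    exact Bpos (S v) (hSne v hv)
  · intro x u v
    show B (T ⁅x, u⁆) v = B (T u) ⁅s.thetaPlus 1 γ x, v⁆
    have hx : x ∈ Submodule.span ℂ (Set.range s.b) := by rw [Module.Basis.span_eq]; trivial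
    refine Submodule.span_induction
      (p := fun x _ => ∀ u v : V, B (T ⁅x, u⁆) v = B (T u) ⁅s.thetaPlus 1 γ x, v⁆)
      ?_ ?_ ?_ ?_ hx u v
    · rintro x ⟨ix, rfl⟩ u v
      refine ind (fun u => ∀ v : V,
        B (T ⁅s.b ix, u⁆) v = B (T u) ⁅s.thetaPlus 1 γ (s.b ix), v⁆) ?_ ?_ ?_ u v
      · intro v; beta_reduce; rw [lie_zero, map_zero, Bzl, Bzl]
      · intro u₁ u₂ h1 h2 v
        beta_reduce at h1 h2 ⊢
        rw [lie_add, map_add, map_add, Badd, Badd, h1 v, h2 v]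
      · intro μ w hw v
        beta_reduce
        have e1 : T ⁅s.b ix, w⁆ =
            ((α ^ (-(μ + (dIx ix : ℂ)).re) : ℝ) : ℂ) • ⁅s.b ix, w⁆ := by
          rw [hT]; exact scaleOp_apply hInt _ _ _ (hmap ix μ w hw)
        have e2 : T w = ((α ^ (-μ.re) : ℝ) : ℂ) • w := by
          rw [hT]; exact scaleOp_apply hInt _ _ _ hw
        have e3 : B ⁅s.b ix, w⁆ v = B w ⁅s.thetaPlus α γ (s.b ix), v⁆ := Binv _ _ _
        have e4 : ⁅s.thetaPlus α γ (s.b ix), v⁆ =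
            ((α : ℂ) ^ (dIx ix)) • ⁅s.thetaPlus 1 γ (s.b ix), v⁆ := by
          rw [s.thetaPlus_basis α γ ix, s.thetaPlus_basis 1 γ ix, hthetaB ix, smul_lie]
        have e5 : (starRingEnd ℂ) ((α : ℂ) ^ (dIx ix)) = ((α ^ (dIx ix) : ℝ) : ℂ) := by
          rw [← Complex.ofReal_zpow, Complex.conj_ofReal]
        rw [e1, Bsmul, e2, Bsmul, e3, e4, Bsmulr, e5, ← mul_assoc, ← Complex.ofReal_mul]
        have hre : α ^ (-(μ + (dIx ix : ℂ)).re) * α ^ (dIx ix) = α ^ (-μ.re) := by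
          rw [← Real.rpow_intCast α (dIx ix), ← Real.rpow_add hα]
          congr 1
          simp only [Complex.add_re, Complex.intCast_re]
          ring
        rw [hre]
    · intro u v
      rw [zero_lie, map_zero, Bzl, s.thetaPlus_zero, zero_lie, Bzr]
    · intro x y hx' hy' h1 h2 u v
      rw [add_lie, map_add, Badd, s.thetaPlus_add, add_lie, Baddr, h1, h2]
    · intro c x hx' h1 u v
      rw [smul_lie, map_smul, Bsmul, s.thetaPlus_smul, smul_lie, Bsmulr,
        Complex.conj_conj, h1]
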